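/- Let Y : ℝ³ → ℝ³ be Lebesgue measurable with ‖Y‖_{L³ʷ(ℝ³)} < ∞ and such that ‖𝟙_{B(0,r)}·Y‖_{L³ʷ(ℝ³)} → 0 as r → 0⁺. Then for every continuous, compactly supported ζ : ℝ³ → ℝ³, one has λ · ∫_{ℝ³} Y(λx)·ζ(x) dx → 0 as λ → 0⁺ (the integrand is absolutely integrable for each λ > 0, and the limit of the scalar quantity is 0). -/

import Mathlib

open MeasureTheory ENNReal Filter Set Metric

noncomputable section

/-- Points of `ℝ³` with the Euclidean norm. -/
abbrev E3 := EuclideanSpace ℝ (Fin 3)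

/-- The weak-`L³` (Lorentz `L^{3,∞}`) quasinorm of a vector field `g : ℝ³ → ℝ³` with
respect to Lebesgue measure:
`‖g‖_{L³ʷ} = sup_{t>0} t · |{x : |g(x)| > t}|^{1/3}`. -/
def weakL3 (g : E3 → E3) : ℝ≥0∞ :=
  ⨆ (t : ℝ) (_ : 0 < t),
    ENNReal.ofReal t * (volume {x : E3 | t < ‖g x‖}) ^ ((1 : ℝ) / 3)

lemma weakL3_mono {f g : E3 → E3} (h : ∀ x, ‖f x‖ ≤ ‖g x‖) : weakL3 f ≤ weakL3 g := by
  refine iSup₂_mono fun t ht => ?_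
  exact mul_le_mul_right (ENNReal.rpow_le_rpow (measure_mono fun x hx => lt_of_lt_of_le hx (h x))
    (by norm_num)) _

lemma weakL3_dist_le (g : E3 → E3) {t : ℝ} (ht : 0 < t) :
    volume {x : E3 | t < ‖g x‖} ≤ weakL3 g ^ (3:ℝ) * ENNReal.ofReal (t ^ (-(3:ℝ))) := by
  set D := volume {x : E3 | t < ‖g x‖} with hD
  have h1 : ENNReal.ofReal t * D ^ ((1:ℝ)/3) ≤ weakL3 g := by
    refine le_trans (le_refl _) ?_
    exact le_iSup₂ (f := fun (t : ℝ) (_ : 0 < t) =>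
      ENNReal.ofReal t * (volume {x : E3 | t < ‖g x‖}) ^ ((1:ℝ)/3)) t ht
  have ht0 : ENNReal.ofReal t ≠ 0 := by simp [ht]
  have h2 : D ^ ((1:ℝ)/3) ≤ weakL3 g / ENNReal.ofReal t :=
    (ENNReal.le_div_iff_mul_le (Or.inl ht0) (Or.inl ofReal_ne_top)).2 (by rwa [mul_comm])
  have h3 : D = (D ^ ((1:ℝ)/3)) ^ (3:ℝ) := by
    rw [← ENNReal.rpow_mul]; norm_num
  calc D = (D ^ ((1:ℝ)/3)) ^ (3:ℝ) := h3
    _ ≤ (weakL3 g / ENNReal.ofReal t) ^ (3:ℝ) := ENNReal.rpow_le_rpow h2 (by norm_num)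
    _ = weakL3 g ^ (3:ℝ) * ENNReal.ofReal (t ^ (-(3:ℝ))) := by
        rw [ENNReal.div_rpow_of_nonneg _ _ (by norm_num : (0:ℝ) ≤ 3),
          div_eq_mul_inv, ENNReal.ofReal_rpow_of_pos ht,
          ← ENNReal.ofReal_inv_of_pos (Real.rpow_pos_of_pos ht _),
          ← Real.rpow_neg ht.le]

lemma lintegral_ball_two_term (g : E3 → E3) (hg : Measurable g) {r s : ℝ} (hr : 0 < r)
    (hs : 0 < s) (hW : weakL3 ((Metric.ball (0:E3) r).indicator g) ≠ ⊤) :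
    ∫⁻ x in Metric.ball (0:E3) r, ENNReal.ofReal ‖g x‖ ≤
      ENNReal.ofReal s * volume (Metric.ball (0:E3) r)
        + weakL3 ((Metric.ball (0:E3) r).indicator g) ^ (3:ℝ)
          * ENNReal.ofReal (s ^ (-(2:ℝ)) / 2) := by
  set h : E3 → E3 := (Metric.ball (0:E3) r).indicator g with hh
  have hhm : Measurable h := hg.indicator measurableSet_ball
  set W := weakL3 h with hWdef
  set V := volume (Metric.ball (0:E3) r) with hV
  have step1 : ∫⁻ x in Metric.ball (0:E3) r, ENNReal.ofReal ‖g x‖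
      = ∫⁻ x, ENNReal.ofReal ‖h x‖ := by
    rw [← lintegral_indicator measurableSet_ball (fun x => ENNReal.ofReal ‖g x‖)]
    congr 1
    funext x
    by_cases hx : x ∈ Metric.ball (0:E3) r
    · simp [hh, Set.indicator_of_mem hx]
    · simp [hh, Set.indicator_of_notMem hx]
  have step2 : ∫⁻ x, ENNReal.ofReal ‖h x‖
      = ∫⁻ t in Set.Ioi (0:ℝ), volume {a : E3 | t < ‖h a‖} :=
    lintegral_eq_lintegral_meas_lt volume (ae_of_all _ fun x => norm_nonneg _)
      hhm.norm.aemeasurable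
  have hsplit : Set.Ioi (0:ℝ) = Set.Ioc 0 s ∪ Set.Ioi s := (Set.Ioc_union_Ioi_eq_Ioi hs.le).symm
  have hbd1 : ∫⁻ t in Set.Ioc (0:ℝ) s, volume {a : E3 | t < ‖h a‖}
      ≤ ENNReal.ofReal s * V := by
    calc ∫⁻ t in Set.Ioc (0:ℝ) s, volume {a : E3 | t < ‖h a‖}
        ≤ ∫⁻ _ in Set.Ioc (0:ℝ) s, V := by
          refine setLIntegral_mono measurable_const fun t ht => ?_
          refine measure_mono fun x hx => ?_
          simp only [Set.mem_setOf_eq] at hx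
          by_contra hxb
          simp [hh, Set.indicator_of_notMem hxb] at hx
          exact absurd hx (not_lt.2 ht.1.le)
      _ = ENNReal.ofReal s * V := by
          rw [setLIntegral_const, Real.volume_Ioc, mul_comm]
          norm_num
  have hmeas3 : Measurable fun t : ℝ => W ^ (3:ℝ) * ENNReal.ofReal (t ^ (-(3:ℝ))) :=
    (measurable_const.mul ((measurable_id.pow_const _).ennreal_ofReal))
  have hbd2 : ∫⁻ t in Set.Ioi s, volume {a : E3 | t < ‖h a‖}
      ≤ W ^ (3:ℝ) * ENNReal.ofReal (s ^ (-(2:ℝ)) / 2) := by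
    calc ∫⁻ t in Set.Ioi s, volume {a : E3 | t < ‖h a‖}
        ≤ ∫⁻ t in Set.Ioi s, W ^ (3:ℝ) * ENNReal.ofReal (t ^ (-(3:ℝ))) := by
          refine setLIntegral_mono hmeas3 fun t ht => weakL3_dist_le h (hs.trans ht)
      _ = W ^ (3:ℝ) * ∫⁻ t in Set.Ioi s, ENNReal.ofReal (t ^ (-(3:ℝ))) :=
          lintegral_const_mul' _ _ (ENNReal.rpow_ne_top_of_nonneg (by norm_num) hW)
      _ = W ^ (3:ℝ) * ENNReal.ofReal (s ^ (-(2:ℝ)) / 2) := by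
          congr 1
          rw [← ofReal_integral_eq_lintegral_ofReal
            (integrableOn_Ioi_rpow_of_lt (by norm_num) hs)
            ((ae_restrict_iff' measurableSet_Ioi).2 (ae_of_all _ fun t ht =>
              Real.rpow_nonneg (hs.trans ht).le _))]
          rw [integral_Ioi_rpow_of_lt (by norm_num) hs]
          norm_num
  calc ∫⁻ x in Metric.ball (0:E3) r, ENNReal.ofReal ‖g x‖
      = ∫⁻ t in Set.Ioi (0:ℝ), volume {a : E3 | t < ‖h a‖} := by rw [step1, step2]
    _ ≤ (∫⁻ t in Set.Ioc (0:ℝ) s, volume {a : E3 | t < ‖h a‖})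
        + ∫⁻ t in Set.Ioi s, volume {a : E3 | t < ‖h a‖} := by
          rw [hsplit]; exact lintegral_union_le _ _ _
    _ ≤ _ := add_le_add hbd1 hbd2

lemma lintegral_ball_le (g : E3 → E3) (hg : Measurable g) {r : ℝ} (hr : 0 < r)
    (hW : weakL3 ((Metric.ball (0:E3) r).indicator g) ≠ ⊤) :
    ∫⁻ x in Metric.ball (0:E3) r, ENNReal.ofReal ‖g x‖ ≤
      2 * volume (Metric.ball (0:E3) r) ^ ((2:ℝ)/3)
        * weakL3 ((Metric.ball (0:E3) r).indicator g) := by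
  set W := weakL3 ((Metric.ball (0:E3) r).indicator g) with hWdef
  set V := volume (Metric.ball (0:E3) r) with hVdef
  have hV0 : V ≠ 0 := (measure_ball_pos volume 0 hr).ne'
  have hVt : V ≠ ⊤ := measure_ball_lt_top.ne
  by_cases hW0 : W = 0
  · -- LHS ≤ ofReal s * V for all s > 0, hence LHS = 0
    have hb : ∀ s : ℝ, 0 < s →
        ∫⁻ x in Metric.ball (0:E3) r, ENNReal.ofReal ‖g x‖ ≤ ENNReal.ofReal s * V := by
      intro s hs
      have := lintegral_ball_two_term g hg hr hs hW
      rwa [← hWdef, ← hVdef, hW0, ENNReal.zero_rpow_of_pos (by norm_num), zero_mul,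
        add_zero] at this
    have ht : Tendsto (fun s : ℝ => ENNReal.ofReal s * V) (nhdsWithin 0 (Set.Ioi 0))
        (nhds 0) := by
      have h1 : Tendsto (fun s : ℝ => ENNReal.ofReal s) (nhdsWithin 0 (Set.Ioi 0))
          (nhds 0) :=
        Tendsto.mono_left (by simpa using ENNReal.continuous_ofReal.tendsto 0)
          nhdsWithin_le_nhds
      simpa using ENNReal.Tendsto.mul_const h1 (Or.inr hVt)
    have : ∫⁻ x in Metric.ball (0:E3) r, ENNReal.ofReal ‖g x‖ ≤ 0 :=
      ge_of_tendsto ht (eventually_nhdsWithin_of_forall fun s hs => hb s hs)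
    simpa using le_trans this zero_le
  · set w := W.toReal with hwdef
    set v := V.toReal with hvdef
    have hw : 0 < w := ENNReal.toReal_pos hW0 hW
    have hv : 0 < v := ENNReal.toReal_pos hV0 hVt
    set s : ℝ := w / v ^ ((1:ℝ)/3) with hsdef
    have hs : 0 < s := div_pos hw (Real.rpow_pos_of_pos hv _)
    have hWr : W = ENNReal.ofReal w := (ENNReal.ofReal_toReal hW).symm
    have hVr : V = ENNReal.ofReal v := (ENNReal.ofReal_toReal hVt).symm
    have key := lintegral_ball_two_term g hg hr hs hW
    rw [← hWdef, ← hVdef] at key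
    refine le_trans key ?_
    have e1 : ENNReal.ofReal s * V = V ^ ((2:ℝ)/3) * W := by
      rw [hVr, hWr, ENNReal.ofReal_rpow_of_pos hv, ← ENNReal.ofReal_mul hs.le,
        ← ENNReal.ofReal_mul (Real.rpow_nonneg hv.le _)]
      congr 1
      have hv1 : v ^ ((2:ℝ)/3) * v ^ ((1:ℝ)/3) = v := by
        rw [← Real.rpow_add hv]; norm_num
      field_simp [hsdef]
      have ha : v ^ ((1:ℝ)/3) ≠ 0 := (Real.rpow_pos_of_pos hv _).ne'
      linear_combination (-(w * (v ^ ((1:ℝ)/3))⁻¹)) * hv1 + w * v ^ ((2:ℝ)/3) * (mul_inv_cancel₀ ha)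
    have e2 : W ^ (3:ℝ) * ENNReal.ofReal (s ^ (-(2:ℝ)) / 2) ≤ V ^ ((2:ℝ)/3) * W := by
      rw [hWr, hVr, ENNReal.ofReal_rpow_of_pos hw, ENNReal.ofReal_rpow_of_pos hv,
        ← ENNReal.ofReal_mul (Real.rpow_nonneg hw.le _),
        ← ENNReal.ofReal_mul (Real.rpow_nonneg hv.le _)]
      refine ENNReal.ofReal_le_ofReal ?_
      have hs2 : s ^ (-(2:ℝ)) = w ^ (-(2:ℝ)) * v ^ ((2:ℝ)/3) := by
        rw [hsdef, Real.div_rpow hw.le (Real.rpow_nonneg hv.le _),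
          ← Real.rpow_mul hv.le, show (1:ℝ)/3 * -2 = -((2:ℝ)/3) by norm_num,
          Real.rpow_neg hv.le, div_eq_mul_inv, inv_inv]
      rw [hs2]
      have : w ^ (3:ℝ) * w ^ (-(2:ℝ)) = w := by
        rw [← Real.rpow_add hw]; norm_num
      calc w ^ (3:ℝ) * (w ^ (-(2:ℝ)) * v ^ ((2:ℝ)/3) / 2)
          = (w ^ (3:ℝ) * w ^ (-(2:ℝ))) * v ^ ((2:ℝ)/3) / 2 := by ring
        _ = w * v ^ ((2:ℝ)/3) / 2 := by rw [this]
        _ ≤ v ^ ((2:ℝ)/3) * w := by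
            rw [mul_comm]
            nlinarith [mul_pos (Real.rpow_pos_of_pos hv ((2:ℝ)/3)) hw]
    calc ENNReal.ofReal s * V + W ^ (3:ℝ) * ENNReal.ofReal (s ^ (-(2:ℝ)) / 2)
        ≤ V ^ ((2:ℝ)/3) * W + V ^ ((2:ℝ)/3) * W := add_le_add e1.le e2
      _ = 2 * V ^ ((2:ℝ)/3) * W := by ring

/-- **Critical rescalings of functions in the class `𝕃` vanish distributionally.**
If `Y ∈ L³ʷ(ℝ³)` and `‖𝟙_{B(0,r)} Y‖_{L³ʷ} → 0` as `r → 0⁺`, then for every continuous,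
compactly supported `ζ : ℝ³ → ℝ³`, the integrand `Y(λx)·ζ(x)` is absolutely integrable for
each `λ > 0` and `λ ∫_{ℝ³} Y(λx)·ζ(x) dx → 0` as `λ → 0⁺`. -/
theorem rescaled_L_class_tendsto_zero (Y : E3 → E3) (hY : Measurable Y)
    (hfin : weakL3 Y < ⊤)
    (hsmall : Tendsto (fun r : ℝ => weakL3 ((Metric.ball (0 : E3) r).indicator Y))
      (nhdsWithin 0 (Set.Ioi 0)) (nhds 0)) :
    ∀ ζ : E3 → E3, Continuous ζ → HasCompactSupport ζ →
      (∀ lam : ℝ, 0 < lam →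
        Integrable (fun x : E3 => (inner ℝ (Y (lam • x)) (ζ x) : ℝ)) volume) ∧
      Tendsto (fun lam : ℝ => lam * ∫ x : E3, (inner ℝ (Y (lam • x)) (ζ x) : ℝ))
        (nhdsWithin 0 (Set.Ioi 0)) (nhds 0) := by
  intro ζ hζc hζs
  -- bound on ζ
  obtain ⟨M, hM⟩ := hζs.exists_bound_of_continuous hζc
  have hM0 : 0 ≤ M := le_trans (norm_nonneg _) (hM 0)
  -- radius containing the support
  obtain ⟨R₀, hR₀, hRsub₀⟩ := hζs.isBounded.subset_closedBall_lt 0 0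
  set R : ℝ := R₀ + 1 with hRdef
  have hR : 0 < R := by linarith
  have hRsub : tsupport ζ ⊆ Metric.ball (0 : E3) R :=
    hRsub₀.trans (Metric.closedBall_subset_ball (by linarith))
  -- notation
  set v1 : ℝ≥0∞ := volume (Metric.ball (0:E3) 1) with hv1def
  have hv1t : v1 ≠ ⊤ := measure_ball_lt_top.ne
  set Wf : ℝ → ℝ≥0∞ := fun lam => weakL3 ((Metric.ball (0:E3) (lam * R)).indicator Y)
    with hWfdef
  have hWfle : ∀ lam : ℝ, Wf lam ≤ weakL3 Y := fun lam =>
    weakL3_mono fun x => by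
      by_cases hx : x ∈ Metric.ball (0:E3) (lam * R)
      · simp [Set.indicator_of_mem hx]
      · simp [Set.indicator_of_notMem hx]
  have hWft : ∀ lam : ℝ, Wf lam ≠ ⊤ := fun lam => ((hWfle lam).trans_lt hfin).ne
  -- the key pointwise bound for the lintegral of the inner product
  have hptwise : ∀ lam : ℝ, 0 < lam → ∀ x : E3,
      ENNReal.ofReal ‖(inner ℝ (Y (lam • x)) (ζ x) : ℝ)‖ ≤
        (Metric.ball (0:E3) (lam * R)).indicator
          (fun y => ENNReal.ofReal M * ENNReal.ofReal ‖Y y‖) (lam • x) := by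
    intro lam hlam x
    by_cases hx : x ∈ Metric.ball (0:E3) R
    · have hx' : lam • x ∈ Metric.ball (0:E3) (lam * R) := by
        simp only [Metric.mem_ball, dist_zero_right] at hx ⊢
        rw [norm_smul, Real.norm_eq_abs, abs_of_pos hlam]
        exact (mul_lt_mul_iff_right₀ hlam).2 hx
      rw [Set.indicator_of_mem hx']
      rw [← ENNReal.ofReal_mul hM0]
      refine ENNReal.ofReal_le_ofReal ?_
      calc ‖(inner ℝ (Y (lam • x)) (ζ x) : ℝ)‖ ≤ ‖Y (lam • x)‖ * ‖ζ x‖ := norm_inner_le_norm _ _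
        _ ≤ M * ‖Y (lam • x)‖ := by
            rw [mul_comm]
            exact mul_le_mul_of_nonneg_right (hM x) (norm_nonneg _)
    · have hζx : ζ x = 0 := image_eq_zero_of_notMem_tsupport fun hmem => hx (hRsub hmem)
      simp [hζx]
  -- change of variables bound
  have hchg : ∀ lam : ℝ, 0 < lam →
      (∫⁻ x : E3, (Metric.ball (0:E3) (lam * R)).indicator
          (fun y => ENNReal.ofReal M * ENNReal.ofReal ‖Y y‖) (lam • x))
        = ENNReal.ofReal |((lam : ℝ) ^ Module.finrank ℝ E3)⁻¹| *
            (ENNReal.ofReal M * ∫⁻ y in Metric.ball (0:E3) (lam * R), ENNReal.ofReal ‖Y y‖) := by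
    intro lam hlam
    have hGm : Measurable ((Metric.ball (0:E3) (lam * R)).indicator
        (fun y => ENNReal.ofReal M * ENNReal.ofReal ‖Y y‖)) :=
      (measurable_const.mul hY.norm.ennreal_ofReal).indicator measurableSet_ball
    rw [← lintegral_map hGm (measurable_const_smul lam),
      Measure.map_addHaar_smul volume hlam.ne', lintegral_smul_measure,
      lintegral_indicator measurableSet_ball,
      lintegral_const_mul' _ _ ENNReal.ofReal_ne_top, smul_eq_mul]
  -- the main quantitative bound
  have hLbound : ∀ lam : ℝ, 0 < lam →
      ∫⁻ x : E3, ENNReal.ofReal ‖(inner ℝ (Y (lam • x)) (ζ x) : ℝ)‖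
        ≤ ENNReal.ofReal |((lam : ℝ) ^ Module.finrank ℝ E3)⁻¹| *
            (ENNReal.ofReal M * (2 * (ENNReal.ofReal ((lam * R) ^ Module.finrank ℝ E3) * v1) ^ ((2:ℝ)/3)
              * Wf lam)) := by
    intro lam hlam
    have hlR : 0 < lam * R := mul_pos hlam hR
    calc ∫⁻ x : E3, ENNReal.ofReal ‖(inner ℝ (Y (lam • x)) (ζ x) : ℝ)‖
        ≤ ∫⁻ x : E3, (Metric.ball (0:E3) (lam * R)).indicator
            (fun y => ENNReal.ofReal M * ENNReal.ofReal ‖Y y‖) (lam • x) :=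
          lintegral_mono (hptwise lam hlam)
      _ = ENNReal.ofReal |((lam : ℝ) ^ Module.finrank ℝ E3)⁻¹| *
            (ENNReal.ofReal M * ∫⁻ y in Metric.ball (0:E3) (lam * R), ENNReal.ofReal ‖Y y‖) :=
          hchg lam hlam
      _ ≤ _ := by
          refine mul_le_mul_right (mul_le_mul_right ?_ _) _
          have := lintegral_ball_le Y hY hlR (hWft lam)
          rwa [Measure.addHaar_ball volume (0:E3) hlR.le] at this
  have hfr : Module.finrank ℝ E3 = 3 := finrank_euclideanSpace_fin
  set C : ℝ≥0∞ := ENNReal.ofReal (2 * M * R ^ 2) * v1 ^ ((2:ℝ)/3) with hCdef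
  have hCt : C ≠ ⊤ := ENNReal.mul_ne_top ENNReal.ofReal_ne_top
    (ENNReal.rpow_ne_top_of_nonneg (by norm_num) hv1t)
  have hmain : ∀ lam : ℝ, 0 < lam →
      ENNReal.ofReal lam * ∫⁻ x : E3, ENNReal.ofReal ‖(inner ℝ (Y (lam • x)) (ζ x) : ℝ)‖
        ≤ C * Wf lam := by
    intro lam hlam
    have hlR : 0 < lam * R := mul_pos hlam hR
    refine le_trans (mul_le_mul_right (hLbound lam hlam) _) ?_
    apply le_of_eq
    have h1 : ENNReal.ofReal ((lam * R) ^ (3:ℕ)) ^ ((2:ℝ)/3)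
        = ENNReal.ofReal ((lam * R) ^ 2) := by
      rw [ENNReal.ofReal_rpow_of_pos (by positivity)]
      congr 1
      rw [← Real.rpow_natCast (lam * R) 3, ← Real.rpow_mul hlR.le,
        show ((3:ℕ):ℝ) * (2/3) = ((2:ℕ):ℝ) by norm_num, Real.rpow_natCast]
    rw [hfr, abs_of_pos (show (0:ℝ) < (lam ^ 3)⁻¹ by positivity),
      ENNReal.mul_rpow_of_nonneg _ _ (show (0:ℝ) ≤ 2/3 by norm_num), h1]
    have e : ENNReal.ofReal lam * ENNReal.ofReal ((lam ^ 3)⁻¹) * 2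
        * ENNReal.ofReal ((lam * R) ^ 2) * ENNReal.ofReal M
        = ENNReal.ofReal (2 * M * R ^ 2) := by
      rw [show (2:ℝ≥0∞) = ENNReal.ofReal (2:ℝ) by simp,
        ← ENNReal.ofReal_mul hlam.le, ← ENNReal.ofReal_mul (by positivity),
        ← ENNReal.ofReal_mul (by positivity), ← ENNReal.ofReal_mul (by positivity)]
      congr 1
      field_simp
    rw [hCdef, ← e]
    ring
  have hint : ∀ lam : ℝ, 0 < lam →
      Integrable (fun x : E3 => (inner ℝ (Y (lam • x)) (ζ x) : ℝ)) volume := by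
    intro lam hlam
    have hlR : 0 < lam * R := mul_pos hlam hR
    constructor
    · exact ((hY.comp (measurable_const_smul lam)).inner hζc.measurable).aestronglyMeasurable
    · rw [hasFiniteIntegral_iff_norm]
      refine lt_of_le_of_lt (hLbound lam hlam) ?_
      refine ENNReal.mul_lt_top ENNReal.ofReal_lt_top ?_
      refine ENNReal.mul_lt_top ENNReal.ofReal_lt_top ?_
      refine ENNReal.mul_lt_top (ENNReal.mul_lt_top (by norm_num) ?_) ?_
      · exact (ENNReal.rpow_ne_top_of_nonneg (by norm_num)
          (ENNReal.mul_ne_top ENNReal.ofReal_ne_top hv1t)).lt_top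
      · exact ((hWfle lam).trans_lt hfin)
  refine ⟨hint, ?_⟩
  have hWtend : Tendsto Wf (nhdsWithin 0 (Set.Ioi 0)) (nhds 0) := by
    have hmul : Tendsto (fun lam : ℝ => lam * R) (nhdsWithin 0 (Set.Ioi 0))
        (nhdsWithin 0 (Set.Ioi 0)) := by
      rw [tendsto_nhdsWithin_iff]
      constructor
      · have h0 : Tendsto (fun k : ℝ => k * R) (nhds 0) (nhds (0 * R)) :=
          tendsto_id.mul_const R
        rw [zero_mul] at h0
        exact h0.mono_left nhdsWithin_le_nhds
      · exact eventually_nhdsWithin_of_forall fun lam hlam => mul_pos hlam hR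
    exact hsmall.comp hmul
  have hCW : Tendsto (fun lam => C * Wf lam) (nhdsWithin 0 (Set.Ioi 0)) (nhds 0) := by
    simpa using ENNReal.Tendsto.const_mul hWtend (Or.inr hCt)
  have htoReal : Tendsto (fun lam => (C * Wf lam).toReal) (nhdsWithin 0 (Set.Ioi 0))
      (nhds 0) := by
    have := (ENNReal.tendsto_toReal (show (0:ℝ≥0∞) ≠ ⊤ by simp)).comp hCW
    simpa only [Function.comp_def, ENNReal.toReal_zero] using this
  refine squeeze_zero_norm' ?_ htoReal
  refine eventually_nhdsWithin_of_forall fun lam hlam => ?_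
  replace hlam : 0 < lam := hlam
  have hCWt : C * Wf lam ≠ ⊤ := ENNReal.mul_ne_top hCt (hWft lam)
  calc ‖lam * ∫ x : E3, (inner ℝ (Y (lam • x)) (ζ x) : ℝ)‖
      = lam * ‖∫ x : E3, (inner ℝ (Y (lam • x)) (ζ x) : ℝ)‖ := by
        rw [norm_mul, Real.norm_eq_abs lam, abs_of_pos hlam]
    _ ≤ lam * (∫⁻ x : E3, ENNReal.ofReal ‖(inner ℝ (Y (lam • x)) (ζ x) : ℝ)‖).toReal :=
        mul_le_mul_of_nonneg_left (norm_integral_le_lintegral_norm _) hlam.le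
    _ = (ENNReal.ofReal lam
          * ∫⁻ x : E3, ENNReal.ofReal ‖(inner ℝ (Y (lam • x)) (ζ x) : ℝ)‖).toReal := by
        rw [ENNReal.toReal_mul, ENNReal.toReal_ofReal hlam.le]
    _ ≤ (C * Wf lam).toReal := ENNReal.toReal_mono hCWt (hmain lam hlam)
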